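/- Let E be a measurable subset of a bounded open set Ω ⊂ ℝⁿ with Per_{s₀}(E;Ω) < ∞ for some s₀ ∈ (0,1). Then lim_{s→0⁺} s·Per_s(E;Ω) = H^{n-1}(S^{n-1})·|E|. -/

import Mathlib

open MeasureTheory Filter Metric Set

lemma lintegral_fun_norm_addHaar' {E : Type*} [NormedAddCommGroup E] [NormedSpace ℝ E]
    [MeasurableSpace E] [BorelSpace E] [Nontrivial E] [FiniteDimensional ℝ E]
    (μ : Measure E) [μ.IsAddHaarMeasure] (g : ℝ → ENNReal) (hg : Measurable g) :
    ∫⁻ x, g ‖x‖ ∂μ = (Module.finrank ℝ E : ENNReal) * μ (ball 0 1) *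
      ∫⁻ y in Ioi (0 : ℝ), ENNReal.ofReal (y ^ (Module.finrank ℝ E - 1)) * g y := by
  have h1 : ∫⁻ x, g ‖x‖ ∂μ = ∫⁻ x in ({(0 : E)}ᶜ), g ‖x‖ ∂μ := by
    rw [restrict_compl_singleton]
  rw [h1, ← Subtype.range_coe (s := ({(0:E)}ᶜ : Set E)), ← Set.image_univ,
    ← setLIntegral_subtype (measurableSet_singleton (0:E)).compl univ (fun x => g ‖x‖),
    Measure.restrict_univ]
  have h2 : ∀ x : ({(0:E)}ᶜ : Set E), g ‖(x : E)‖ =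
      (fun p : sphere (0:E) 1 × Ioi (0:ℝ) => g p.2.1) ((homeomorphUnitSphereProd E) x) := by
    intro x; simp
  rw [lintegral_congr h2,
    (μ.measurePreserving_homeomorphUnitSphereProd).lintegral_comp_emb
    (Homeomorph.measurableEmbedding _) (fun p => g p.2.1)]
  have h3 := lintegral_prod (μ := μ.toSphere)
    (ν := Measure.volumeIoiPow (Module.finrank ℝ E - 1))
    (fun p : sphere (0:E) 1 × Ioi (0:ℝ) => g p.2.1)
    ((hg.comp (measurable_subtype_coe.comp measurable_snd)).aemeasurable)
  rw [h3]
  simp only [lintegral_const]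
  rw [Measure.toSphere_apply_univ, mul_comm]
  congr 1
  rw [Measure.volumeIoiPow, lintegral_withDensity_eq_lintegral_mul
    (Measure.comap Subtype.val volume)
    (f := fun r : Ioi (0:ℝ) => ENNReal.ofReal (r.1 ^ (Module.finrank ℝ E - 1)))
    (by exact (measurable_subtype_coe.pow_const _).ennreal_ofReal)
    (g := fun y : Ioi (0:ℝ) => g y.1) (hg.comp measurable_subtype_coe)]
  have h4 := setLIntegral_subtype (μ := volume) (s := Ioi (0:ℝ)) measurableSet_Ioi univ
      (fun y => ENNReal.ofReal (y ^ (Module.finrank ℝ E - 1)) * g y)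
  simp only [Measure.restrict_univ, Set.image_univ, Subtype.range_coe] at h4
  exact h4


lemma Ival {n : ℕ} {s : ℝ} (hs : 0 < s) :
    ∫⁻ z in (ball (0 : EuclideanSpace ℝ (Fin n)) 1)ᶜ,
      ENNReal.ofReal (‖z‖ ^ (-((n : ℝ) + s))) =
    (n : ENNReal) * volume (ball (0 : EuclideanSpace ℝ (Fin n)) 1) * ENNReal.ofReal (1 / s) := by
  rcases Nat.eq_zero_or_pos n with hn | hn
  · subst hn
    have hb : (ball (0 : EuclideanSpace ℝ (Fin 0)) 1)ᶜ = ∅ := by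
      ext z
      simp only [mem_compl_iff, mem_ball_zero_iff, mem_empty_iff_false, iff_false, not_not]
      rw [Subsingleton.elim z 0, norm_zero]; exact one_pos
    rw [hb]
    simp
  · have : Nontrivial (EuclideanSpace ℝ (Fin n)) :=
      Module.nontrivial_of_finrank_pos (R := ℝ) (by rw [finrank_euclideanSpace_fin]; exact hn)
    set p : ℝ := (n : ℝ) + s with hp
    set g : ℝ → ENNReal := (Ici (1:ℝ)).indicator (fun r => ENNReal.ofReal (r ^ (-p))) with hgdef
    have hg : Measurable g :=
      ((measurable_id.pow_const _).ennreal_ofReal).indicator measurableSet_Ici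
    have key := lintegral_fun_norm_addHaar' (volume : Measure (EuclideanSpace ℝ (Fin n))) g hg
    have hL : ∫⁻ x : EuclideanSpace ℝ (Fin n), g ‖x‖ =
        ∫⁻ z in (ball (0 : EuclideanSpace ℝ (Fin n)) 1)ᶜ,
          ENNReal.ofReal (‖z‖ ^ (-p)) := by
      rw [← lintegral_indicator (measurableSet_ball.compl)
        (fun z => ENNReal.ofReal (‖z‖ ^ (-p)))]
      refine lintegral_congr fun x => ?_
      simp only [hgdef, indicator_apply, mem_Ici]
      by_cases hx : (1:ℝ) ≤ ‖x‖
      · rw [if_pos hx, indicator_of_mem (by simpa [mem_ball_zero_iff, not_lt] using hx)]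
      · rw [if_neg hx, indicator_of_notMem (by simpa [mem_ball_zero_iff, not_lt] using hx)]
    have hR : ∫⁻ y in Ioi (0:ℝ),
        ENNReal.ofReal (y ^ (Module.finrank ℝ (EuclideanSpace ℝ (Fin n)) - 1)) * g y
        = ENNReal.ofReal (1 / s) := by
      have hsub : ∀ y : ℝ, ENNReal.ofReal (y ^ (Module.finrank ℝ (EuclideanSpace ℝ (Fin n)) - 1)) * g y
          = (Ici (1:ℝ)).indicator (fun y => ENNReal.ofReal (y ^ ((n:ℝ) - 1 - p))) y := by
        intro y
        simp only [hgdef, indicator_apply, mem_Ici]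
        by_cases hy : (1:ℝ) ≤ y
        · have hy0 : (0:ℝ) < y := lt_of_lt_of_le one_pos hy
          rw [if_pos hy, if_pos hy, ← ENNReal.ofReal_mul (by positivity)]
          congr 1
          rw [finrank_euclideanSpace_fin, ← Real.rpow_natCast y (n-1), Nat.cast_sub hn,
            ← Real.rpow_add hy0]
          ring_nf
        · rw [if_neg hy, if_neg hy, mul_zero]
      simp only [hsub]
      have hinter : Ici (1:ℝ) ∩ Ioi 0 = Ici 1 :=
        inter_eq_self_of_subset_left (fun y hy => mem_Ioi.mpr (lt_of_lt_of_le one_pos (mem_Ici.mp hy)))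
      rw [lintegral_indicator measurableSet_Ici, Measure.restrict_restrict measurableSet_Ici,
        hinter, ← Measure.restrict_congr_set Ioi_ae_eq_Ici]
      have ha : (n:ℝ) - 1 - p < -1 := by rw [hp]; linarith
      rw [← ofReal_integral_eq_lintegral_ofReal (integrableOn_Ioi_rpow_of_lt ha one_pos)
        (by filter_upwards [ae_restrict_mem measurableSet_Ioi] with y hy
            exact Real.rpow_nonneg (le_of_lt (lt_trans one_pos hy)) _)]
      rw [integral_Ioi_rpow_of_lt ha one_pos]
      congr 1
      rw [Real.one_rpow]
      rw [hp]; ring_nf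
    rw [hL, hR, finrank_euclideanSpace_fin] at key
    exact key

noncomputable def interL (n : ℕ) (s : ℝ) (A B : Set (EuclideanSpace ℝ (Fin n))) : ENNReal :=
  ∫⁻ x in A, ∫⁻ y in B, ENNReal.ofReal (‖x - y‖ ^ (-((n : ℝ) + s)))

noncomputable def fracPer (n : ℕ) (s : ℝ) (E Ω : Set (EuclideanSpace ℝ (Fin n))) : ENNReal :=
  interL n s (E ∩ Ω) (Eᶜ ∩ Ω) + interL n s (E ∩ Ω) (Eᶜ ∩ Ωᶜ) + interL n s (E ∩ Ωᶜ) (Eᶜ ∩ Ω)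

/-- The (n-1)-dimensional measure of the unit sphere `S^{n-1}`, i.e. `n·ω_n`. -/
noncomputable def sphereArea (n : ℕ) : ℝ :=
  (n : ℝ) * (volume (ball (0 : EuclideanSpace ℝ (Fin n)) 1)).toReal

lemma meas_inner (n : ℕ) (s : ℝ) (S : Set (EuclideanSpace ℝ (Fin n))) :
    Measurable fun x : EuclideanSpace ℝ (Fin n) =>
      ∫⁻ y in S, ENNReal.ofReal (‖x - y‖ ^ (-((n : ℝ) + s))) := by
  apply Measurable.lintegral_prod_right'
    (f := fun p : EuclideanSpace ℝ (Fin n) × EuclideanSpace ℝ (Fin n) =>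
      ENNReal.ofReal (‖p.1 - p.2‖ ^ (-((n : ℝ) + s))))
  exact (((measurable_fst.sub measurable_snd).norm).pow_const _).ennreal_ofReal

lemma fracPer_eq {n : ℕ} (s : ℝ) {E Ω : Set (EuclideanSpace ℝ (Fin n))}
    (hE : MeasurableSet E) (hΩ : MeasurableSet Ω) (hEΩ : E ⊆ Ω) :
    fracPer n s E Ω = ∫⁻ x in E, ∫⁻ y in Eᶜ,
      ENNReal.ofReal (‖x - y‖ ^ (-((n : ℝ) + s))) := by
  have h1 : E ∩ Ω = E := inter_eq_self_of_subset_left hEΩ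
  have h2 : E ∩ Ωᶜ = ∅ := by
    rw [← diff_eq, diff_eq_empty]; exact hEΩ
  rw [fracPer, interL, interL, interL, h1, h2]
  simp only [Measure.restrict_empty, lintegral_zero_measure, add_zero]
  rw [← lintegral_add_left (meas_inner n s (Eᶜ ∩ Ω))]
  refine lintegral_congr fun x => ?_
  have hd : Disjoint (Eᶜ ∩ Ω) (Eᶜ ∩ Ωᶜ) :=
    Disjoint.mono inter_subset_right inter_subset_right disjoint_compl_right
  rw [← lintegral_union (hE.compl.inter hΩ.compl) hd, inter_union_compl]

lemma inner_ball_eq {n : ℕ} (s : ℝ) (x : EuclideanSpace ℝ (Fin n)) :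
    ∫⁻ y in (ball x 1)ᶜ, ENNReal.ofReal (‖x - y‖ ^ (-((n : ℝ) + s))) =
    ∫⁻ z in (ball (0 : EuclideanSpace ℝ (Fin n)) 1)ᶜ,
      ENNReal.ofReal (‖z‖ ^ (-((n : ℝ) + s))) := by
  rw [← lintegral_indicator measurableSet_ball.compl, ← lintegral_indicator measurableSet_ball.compl]
  rw [← lintegral_sub_right_eq_self
    (fun z => ((ball (0 : EuclideanSpace ℝ (Fin n)) 1)ᶜ).indicator
      (fun z => ENNReal.ofReal (‖z‖ ^ (-((n : ℝ) + s)))) z) x]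
  refine lintegral_congr fun y => ?_
  by_cases hy : y ∈ ball x 1
  · rw [indicator_of_notMem (not_not_intro hy), indicator_of_notMem]
    simp only [mem_compl_iff, not_not, mem_ball_zero_iff]
    rwa [← dist_eq_norm, ← mem_ball]
  · rw [indicator_of_mem (show y ∈ (ball x 1)ᶜ from hy),
      indicator_of_mem, norm_sub_rev]
    simp only [mem_compl_iff, mem_ball_zero_iff]
    rw [← dist_eq_norm, ← mem_ball]
    exact hy

theorem stmt_11 {n : ℕ} (Ω E : Set (EuclideanSpace ℝ (Fin n)))
    (hΩo : IsOpen Ω) (hΩb : Bornology.IsBounded Ω)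
    (hE : MeasurableSet E) (hEΩ : E ⊆ Ω)
    (s₀ : ℝ) (hs₀ : s₀ ∈ Set.Ioo (0 : ℝ) 1) (hfin : fracPer n s₀ E Ω ≠ ⊤) :
    Tendsto (fun s : ℝ => s * (fracPer n s E Ω).toReal)
      (nhdsWithin 0 (Set.Ioi 0)) (nhds (sphereArea n * (volume E).toReal)) := by
  have hΩm : MeasurableSet Ω := hΩo.measurableSet
  set ω : ENNReal := volume (ball (0 : EuclideanSpace ℝ (Fin n)) 1) with hω
  set e : ENNReal := volume E with he
  have hefin : e ≠ ⊤ := by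
    rw [he]
    exact ((measure_mono hEΩ).trans_lt hΩb.measure_lt_top).ne
  have hωfin : ω ≠ ⊤ := measure_ball_lt_top.ne
  have hexp : ∀ t : ℝ, 0 < t → -((n:ℝ) + t) ≠ 0 := fun t ht =>
    neg_ne_zero.mpr (ne_of_gt (add_pos_of_nonneg_of_pos (Nat.cast_nonneg n) ht))
  set I : ℝ → ENNReal := fun s => (n : ENNReal) * ω * ENNReal.ofReal (1 / s) with hI
  have hIfin : ∀ s, I s ≠ ⊤ := fun s =>
    ENNReal.mul_ne_top (ENNReal.mul_ne_top (ENNReal.natCast_ne_top n) hωfin) ENNReal.ofReal_ne_top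
  -- upper bound
  have hub : ∀ s ∈ Ioc (0:ℝ) s₀, fracPer n s E Ω ≤ I s * e + fracPer n s₀ E Ω := by
    intro s hs
    rw [fracPer_eq s hE hΩm hEΩ, fracPer_eq s₀ hE hΩm hEΩ]
    calc ∫⁻ x in E, ∫⁻ y in Eᶜ, ENNReal.ofReal (‖x - y‖ ^ (-((n : ℝ) + s)))
        ≤ ∫⁻ x in E, (I s + ∫⁻ y in Eᶜ, ENNReal.ofReal (‖x - y‖ ^ (-((n : ℝ) + s₀)))) := by
          refine lintegral_mono fun x => ?_
          calc ∫⁻ y in Eᶜ, ENNReal.ofReal (‖x - y‖ ^ (-((n : ℝ) + s)))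
              ≤ ∫⁻ y in ((ball x 1)ᶜ ∪ (Eᶜ ∩ ball x 1)),
                  ENNReal.ofReal (‖x - y‖ ^ (-((n : ℝ) + s))) := by
                refine lintegral_mono_set fun y hy => ?_
                by_cases hyb : y ∈ ball x 1
                · exact Or.inr ⟨hy, hyb⟩
                · exact Or.inl hyb
            _ ≤ (∫⁻ y in (ball x 1)ᶜ, ENNReal.ofReal (‖x - y‖ ^ (-((n : ℝ) + s))))
                + ∫⁻ y in Eᶜ ∩ ball x 1, ENNReal.ofReal (‖x - y‖ ^ (-((n : ℝ) + s))) :=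
                lintegral_union_le _ _ _
            _ ≤ I s + ∫⁻ y in Eᶜ, ENNReal.ofReal (‖x - y‖ ^ (-((n : ℝ) + s₀))) := by
                refine add_le_add ?_ ?_
                · rw [inner_ball_eq s x, Ival hs.1]
                · refine le_trans (setLIntegral_mono' (hE.compl.inter measurableSet_ball)
                    fun y hy => ?_) (lintegral_mono_set inter_subset_left)
                  have hlt : ‖x - y‖ < 1 := by
                    rw [norm_sub_rev, ← dist_eq_norm, ← mem_ball]
                    exact hy.2
                  rcases eq_or_lt_of_le (norm_nonneg (x - y)) with h0 | h0
                  · rw [← h0, Real.zero_rpow (hexp s hs.1), Real.zero_rpow (hexp s₀ hs₀.1)]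
                  · exact ENNReal.ofReal_le_ofReal
                      (Real.rpow_le_rpow_of_exponent_ge h0 hlt.le (by linarith [hs.2]))
      _ = I s * e + ∫⁻ x in E, ∫⁻ y in Eᶜ, ENNReal.ofReal (‖x - y‖ ^ (-((n : ℝ) + s₀))) := by
          rw [lintegral_add_left measurable_const, setLIntegral_const, he]
  -- lower bound
  have hlb : ∀ s ∈ Ioc (0:ℝ) s₀, I s * e ≤ fracPer n s E Ω + e * e := by
    intro s hs
    rw [fracPer_eq s hE hΩm hEΩ]
    have hpt : ∀ x : EuclideanSpace ℝ (Fin n), I s ≤ (∫⁻ y in Eᶜ, ENNReal.ofReal (‖x - y‖ ^ (-((n : ℝ) + s)))) + e := by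
      intro x
      calc I s = ∫⁻ y in (ball x 1)ᶜ, ENNReal.ofReal (‖x - y‖ ^ (-((n : ℝ) + s))) := by
            rw [inner_ball_eq s x, Ival hs.1]
        _ ≤ ∫⁻ y in (Eᶜ ∪ (E ∩ (ball x 1)ᶜ)), ENNReal.ofReal (‖x - y‖ ^ (-((n : ℝ) + s))) := by
            refine lintegral_mono_set fun y hy => ?_
            by_cases hyE : y ∈ E
            · exact Or.inr ⟨hyE, hy⟩
            · exact Or.inl hyE
        _ ≤ (∫⁻ y in Eᶜ, ENNReal.ofReal (‖x - y‖ ^ (-((n : ℝ) + s))))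
            + ∫⁻ y in E ∩ (ball x 1)ᶜ, ENNReal.ofReal (‖x - y‖ ^ (-((n : ℝ) + s))) :=
            lintegral_union_le _ _ _
        _ ≤ (∫⁻ y in Eᶜ, ENNReal.ofReal (‖x - y‖ ^ (-((n : ℝ) + s)))) + e := by
            refine add_le_add (le_refl _) ?_
            calc ∫⁻ y in E ∩ (ball x 1)ᶜ, ENNReal.ofReal (‖x - y‖ ^ (-((n : ℝ) + s)))
                ≤ ∫⁻ _ in E ∩ (ball x 1)ᶜ, 1 := by
                  refine setLIntegral_mono' (hE.inter measurableSet_ball.compl) fun y hy => ?_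
                  have h1 : (1:ℝ) ≤ ‖x - y‖ := by
                    rw [norm_sub_rev, ← dist_eq_norm]
                    simpa [mem_ball, not_lt] using hy.2
                  calc ENNReal.ofReal (‖x - y‖ ^ (-((n : ℝ) + s)))
                      ≤ ENNReal.ofReal 1 := ENNReal.ofReal_le_ofReal
                        (Real.rpow_le_one_of_one_le_of_nonpos h1
                          (neg_nonpos.mpr (add_nonneg (Nat.cast_nonneg n) hs.1.le)))
                    _ = 1 := ENNReal.ofReal_one
              _ = volume (E ∩ (ball x 1)ᶜ) := setLIntegral_one _
              _ ≤ e := measure_mono inter_subset_left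
    calc I s * e = ∫⁻ _ in E, I s := by rw [setLIntegral_const, he]
      _ ≤ ∫⁻ x in E, ((∫⁻ y in Eᶜ, ENNReal.ofReal (‖x - y‖ ^ (-((n : ℝ) + s)))) + e) :=
          lintegral_mono fun x => hpt x
      _ = (∫⁻ x in E, ∫⁻ y in Eᶜ, ENNReal.ofReal (‖x - y‖ ^ (-((n : ℝ) + s)))) + e * e := by
          rw [lintegral_add_right _ measurable_const, setLIntegral_const, he]
  -- finiteness of fracPer for small s
  have hPfin : ∀ s ∈ Ioc (0:ℝ) s₀, fracPer n s E Ω ≠ ⊤ := fun s hs =>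
    ((hub s hs).trans_lt (ENNReal.add_lt_top.mpr
      ⟨ENNReal.mul_lt_top (hIfin s).lt_top hefin.lt_top, hfin.lt_top⟩)).ne
  -- real computation of the main term
  have hIsval : ∀ s : ℝ, 0 < s → s * ((I s * e).toReal) = sphereArea n * e.toReal := by
    intro s hs
    rw [hI]
    simp only [ENNReal.toReal_mul, ENNReal.toReal_natCast, ENNReal.toReal_ofReal (by positivity :
      (0:ℝ) ≤ 1 / s)]
    rw [sphereArea]
    field_simp
    try ring
  set c1 : ℝ := (fracPer n s₀ E Ω).toReal with hc1
  set c2 : ℝ := e.toReal * e.toReal with hc2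
  set T : ℝ := sphereArea n * e.toReal with hT
  have hbound : ∀ s ∈ Ioc (0:ℝ) s₀,
      T - s * c2 ≤ s * (fracPer n s E Ω).toReal ∧
      s * (fracPer n s E Ω).toReal ≤ T + s * c1 := by
    intro s hs
    constructor
    · have h1 : (I s * e).toReal ≤ (fracPer n s E Ω).toReal + c2 := by
        have := ENNReal.toReal_mono (by
          exact ENNReal.add_ne_top.mpr ⟨hPfin s hs, ENNReal.mul_ne_top hefin hefin⟩) (hlb s hs)
        rw [ENNReal.toReal_add (hPfin s hs) (ENNReal.mul_ne_top hefin hefin)] at this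
        rw [hc2, ← ENNReal.toReal_mul]
        exact this
      have h2 : s * (I s * e).toReal ≤ s * ((fracPer n s E Ω).toReal + c2) :=
        mul_le_mul_of_nonneg_left h1 hs.1.le
      rw [hIsval s hs.1] at h2
      rw [hT]
      nlinarith [h2]
    · have h1 : (fracPer n s E Ω).toReal ≤ (I s * e).toReal + c1 := by
        have := ENNReal.toReal_mono (by
          exact ENNReal.add_ne_top.mpr ⟨ENNReal.mul_ne_top (hIfin s) hefin, hfin⟩) (hub s hs)
        rwa [ENNReal.toReal_add (ENNReal.mul_ne_top (hIfin s) hefin) hfin] at this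
      have h2 : s * (fracPer n s E Ω).toReal ≤ s * ((I s * e).toReal + c1) :=
        mul_le_mul_of_nonneg_left h1 hs.1.le
      rw [mul_add, hIsval s hs.1] at h2
      rw [hT]
      linarith [h2]
  have hmem : Ioc (0:ℝ) s₀ ∈ nhdsWithin (0:ℝ) (Ioi 0) :=
    Ioc_mem_nhdsGT_of_mem ⟨le_refl 0, hs₀.1⟩
  refine tendsto_of_tendsto_of_tendsto_of_le_of_le'
    (g := fun s : ℝ => T - s * c2) (h := fun s : ℝ => T + s * c1) ?_ ?_ ?_ ?_
  · have : Tendsto (fun s : ℝ => T - s * c2) (nhds 0) (nhds (T - 0 * c2)) :=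
      (continuous_const.sub (continuous_id.mul continuous_const)).tendsto 0
    simpa using this.mono_left nhdsWithin_le_nhds
  · have : Tendsto (fun s : ℝ => T + s * c1) (nhds 0) (nhds (T + 0 * c1)) :=
      (continuous_const.add (continuous_id.mul continuous_const)).tendsto 0
    simpa using this.mono_left nhdsWithin_le_nhds
  · filter_upwards [hmem] with s hs
    exact (hbound s hs).1
  · filter_upwards [hmem] with s hs
    exact (hbound s hs).2
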